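/- arXiv:2404.01559 — 3 statements merged into one kernel-verified Lean document; each statement's English description precedes it below -/
import Mathlib

section
/- Fix a positive integer m, and call an affine subspace W of ℝ^m rational if W equals the affine span over ℝ of a set of points of ℚ^m (i.e., of points of ℝ^m all of whose coordinates are rational). Let W₁ and W₂ be rational affine subspaces of ℝ^m with W₁ ∩ W₂ nonempty. Then W₁ ∩ W₂ is a rational affine subspace of ℝ^m; in particular, W₁ ∩ W₂ contains a point of ℚ^m and equals the affine span over ℝ of its points lying in ℚ^m. -/
open Matrix Submodule

noncomputable def qcast (m : ℕ) : (Fin m → ℚ) →ₗ[ℚ] (Fin m → ℝ) where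
  toFun x := fun i => (x i : ℝ)
  map_add' x y := by funext i; simp
  map_smul' q x := by funext i; simp [Rat.smul_def]

lemma qcast_apply {m : ℕ} (x : Fin m → ℚ) (i : Fin m) : qcast m x i = (x i : ℝ) := rfl

lemma span_qcast_span {m : ℕ} (S : Set (Fin m → ℚ)) :
    span ℝ (qcast m '' (span ℚ S : Set _)) = span ℝ (qcast m '' S) := by
  refine le_antisymm ?_ (span_mono (Set.image_mono subset_span))
  rw [span_le]
  rintro _ ⟨x, hx, rfl⟩
  have : x ∈ comap (qcast m) ((span ℝ (qcast m '' S)).restrictScalars ℚ) := by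
    refine span_le.2 (fun s hs => ?_) hx
    exact subset_span (Set.mem_image_of_mem _ hs)
  exact this


lemma li_qcast {m k : ℕ} (v : Fin k → Fin m → ℚ) (hv : LinearIndependent ℚ v) :
    LinearIndependent ℝ fun i => qcast m (v i) := by
  classical
  set A : Matrix (Fin k) (Fin m) ℚ := Matrix.of v with hA
  have key : ∀ (F : Type) [Field F] [LinearOrder F] [IsStrictOrderedRing F], ∀ (c : Fin k → F)
      (B : Matrix (Fin k) (Fin m) F), (B * Bᵀ) *ᵥ c = 0 → c ᵥ* B = 0 := by
    intro F _ _ _ c B h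
    have h1 : c ⬝ᵥ ((B * Bᵀ) *ᵥ c) = (c ᵥ* B) ⬝ᵥ (c ᵥ* B) := by
      rw [← Matrix.mulVec_mulVec, Matrix.dotProduct_mulVec, Matrix.mulVec_transpose]
    rw [h, dotProduct_zero] at h1
    exact dotProduct_self_eq_zero.mp h1.symm
  have hvecMul : ∀ c : Fin k → ℚ, c ᵥ* A = ∑ i, c i • v i := by
    intro c; funext j
    simp [Matrix.vecMul, dotProduct, hA, Finset.sum_apply]
  have hG : (A * Aᵀ).det ≠ 0 := by
    intro hdet
    obtain ⟨c, hc0, hc⟩ := Matrix.exists_mulVec_eq_zero_iff.mpr hdet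
    have hu : c ᵥ* A = 0 := key ℚ c A hc
    rw [hvecMul] at hu
    exact hc0 (funext (Fintype.linearIndependent_iff.mp hv c hu))
  set f : ℚ →+* ℝ := Rat.castHom ℝ with hf
  set B : Matrix (Fin k) (Fin m) ℝ := A.map f with hB
  rw [Fintype.linearIndependent_iff]
  intro g hg
  have hgB : g ᵥ* B = 0 := by
    funext j
    have := congrFun hg j
    simpa [Matrix.vecMul, dotProduct, hB, hA, qcast_apply, Finset.sum_apply] using this
  have hBv : (B * Bᵀ) *ᵥ g = 0 := by
    rw [← Matrix.mulVec_mulVec, Matrix.mulVec_transpose, hgB, Matrix.mulVec_zero]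
  have hdetB : (B * Bᵀ).det ≠ 0 := by
    rw [hB, ← Matrix.transpose_map, ← Matrix.map_mul,
      show (A * Aᵀ).map ⇑f = f.mapMatrix (A * Aᵀ) from rfl, ← RingHom.map_det]
    simpa using hG
  intro i
  exact congrFun (Matrix.eq_zero_of_mulVec_eq_zero hdetB hBv) i


lemma finrank_span_qcast {m : ℕ} (E : Submodule ℚ (Fin m → ℚ)) :
    Module.finrank ℝ (span ℝ (qcast m '' (E : Set _))) = Module.finrank ℚ E := by
  classical
  let b := Module.finBasis ℚ E
  set k := Module.finrank ℚ E with hk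
  let v : Fin k → Fin m → ℚ := fun i => (b i : Fin m → ℚ)
  have hrange : Set.range v = E.subtype '' Set.range b := by
    rw [← Set.range_comp]; rfl
  have hvE : span ℚ (Set.range v) = E := by
    rw [hrange, ← Submodule.map_span, b.span_eq, Submodule.map_top, Submodule.range_subtype]
  have hli : LinearIndependent ℚ v :=
    b.linearIndependent.map' E.subtype E.ker_subtype
  have hliR := li_qcast v hli
  have heq : span ℝ (qcast m '' (E : Set _)) = span ℝ (Set.range fun i => qcast m (v i)) := by
    conv_lhs => rw [← hvE]
    rw [span_qcast_span, ← Set.range_comp]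
    rfl
  rw [heq, finrank_span_eq_card hliR, Fintype.card_fin]

lemma sup_coe_span {m : ℕ} (E₁ E₂ : Submodule ℚ (Fin m → ℚ)) :
    span ℝ (qcast m '' (E₁ : Set _)) ⊔ span ℝ (qcast m '' (E₂ : Set _))
      = span ℝ (qcast m '' ((E₁ ⊔ E₂ : Submodule ℚ _) : Set _)) := by
  have h : (E₁ ⊔ E₂ : Submodule ℚ _) = span ℚ ((E₁ : Set _) ∪ E₂) := by
    rw [span_union, span_eq, span_eq]
  rw [h, span_qcast_span, Set.image_union, span_union]

lemma mem_of_qcast_mem_span {m : ℕ} (E : Submodule ℚ (Fin m → ℚ)) (v : Fin m → ℚ)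
    (h : qcast m v ∈ span ℝ (qcast m '' (E : Set _))) : v ∈ E := by
  have hle : E ≤ E ⊔ span ℚ {v} := le_sup_left
  have hspan : span ℝ (qcast m '' ((E ⊔ span ℚ {v} : Submodule ℚ _) : Set _))
      = span ℝ (qcast m '' (E : Set _)) := by
    rw [← sup_coe_span, span_qcast_span, Set.image_singleton, sup_eq_left]
    rw [span_le]
    exact Set.singleton_subset_iff.2 h
  have hfr : Module.finrank ℚ (E ⊔ span ℚ {v} : Submodule ℚ _) ≤ Module.finrank ℚ E := by
    rw [← finrank_span_qcast, hspan, finrank_span_qcast]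
  have := Submodule.eq_of_le_of_finrank_le hle hfr
  rw [this]
  exact le_sup_right (a := E) (subset_span rfl)

lemma inf_coe_span {m : ℕ} (E₁ E₂ : Submodule ℚ (Fin m → ℚ)) :
    span ℝ (qcast m '' (E₁ : Set _)) ⊓ span ℝ (qcast m '' (E₂ : Set _))
      = span ℝ (qcast m '' ((E₁ ⊓ E₂ : Submodule ℚ _) : Set _)) := by
  have hle : span ℝ (qcast m '' ((E₁ ⊓ E₂ : Submodule ℚ _) : Set _))
      ≤ span ℝ (qcast m '' (E₁ : Set _)) ⊓ span ℝ (qcast m '' (E₂ : Set _)) :=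
    le_inf (span_mono (Set.image_mono inf_le_left))
      (span_mono (Set.image_mono inf_le_right))
  refine (Submodule.eq_of_le_of_finrank_le hle ?_).symm
  have h1 := Submodule.finrank_sup_add_finrank_inf_eq
    (span ℝ (qcast m '' (E₁ : Set _))) (span ℝ (qcast m '' (E₂ : Set _)))
  have h2 := Submodule.finrank_sup_add_finrank_inf_eq E₁ E₂
  rw [sup_coe_span, finrank_span_qcast, finrank_span_qcast, finrank_span_qcast] at h1
  have hIle : Module.finrank ℝ
      ↥(span ℝ (qcast m '' (E₁ : Set _)) ⊓ span ℝ (qcast m '' (E₂ : Set _)))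
      = Module.finrank ℚ ↥(E₁ ⊓ E₂) := by omega
  rw [hIle, finrank_span_qcast]


lemma qlift {m : ℕ} (x : Fin m → ℝ) (hx : ∀ i, ∃ q : ℚ, x i = (q : ℝ)) :
    ∃ v : Fin m → ℚ, qcast m v = x := by
  choose q hq using hx
  exact ⟨q, funext fun i => (hq i).symm⟩

/-- An affine subspace `W` of `ℝ^m` is rational if it is the affine span over `ℝ` of a set of
points all of whose coordinates are rational. -/
def IsRationalAffine (m : ℕ) (W : AffineSubspace ℝ (Fin m → ℝ)) : Prop :=
  ∃ S : Set (Fin m → ℝ), (∀ x ∈ S, ∀ i, ∃ q : ℚ, x i = (q : ℝ)) ∧ W = affineSpan ℝ S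

/-- If two rational affine subspaces of `ℝ^m` have a common (real) point, their intersection is
again a rational affine subspace; in particular it contains a rational point and is the affine
span over `ℝ` of its rational points. -/
theorem stmt_4 (m : ℕ) (hm : 0 < m) (W₁ W₂ : AffineSubspace ℝ (Fin m → ℝ))
    (h₁ : IsRationalAffine m W₁) (h₂ : IsRationalAffine m W₂)
    (hne : ((W₁ : Set (Fin m → ℝ)) ∩ (W₂ : Set (Fin m → ℝ))).Nonempty) :
    IsRationalAffine m (W₁ ⊓ W₂) ∧
    (∃ x, x ∈ W₁ ⊓ W₂ ∧ ∀ i, ∃ q : ℚ, x i = (q : ℝ)) ∧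
    W₁ ⊓ W₂ = affineSpan ℝ {x | x ∈ W₁ ⊓ W₂ ∧ ∀ i, ∃ q : ℚ, x i = (q : ℝ)} := by
  classical
  obtain ⟨S₁, hS₁rat, hW₁⟩ := h₁
  obtain ⟨S₂, hS₂rat, hW₂⟩ := h₂
  obtain ⟨p, hp₁, hp₂⟩ := hne
  -- the spanning sets are nonempty
  have hS₁ne : S₁.Nonempty := by
    rcases S₁.eq_empty_or_nonempty with h | h
    · exfalso; rw [h] at hW₁; rw [hW₁] at hp₁
      simp [AffineSubspace.mem_coe] at hp₁
    · exact h
  have hS₂ne : S₂.Nonempty := by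
    rcases S₂.eq_empty_or_nonempty with h | h
    · exfalso; rw [h] at hW₂; rw [hW₂] at hp₂
      simp [AffineSubspace.mem_coe] at hp₂
    · exact h
  obtain ⟨p₁, hp₁S⟩ := hS₁ne
  obtain ⟨p₂, hp₂S⟩ := hS₂ne
  have hp₁W : p₁ ∈ W₁ := by rw [hW₁]; exact subset_affineSpan ℝ S₁ hp₁S
  have hp₂W : p₂ ∈ W₂ := by rw [hW₂]; exact subset_affineSpan ℝ S₂ hp₂S
  -- rational generating sets for the directions
  set Q₁ : Set (Fin m → ℚ) := qcast m ⁻¹' ((· -ᵥ p₁) '' S₁) with hQ₁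
  set Q₂ : Set (Fin m → ℚ) := qcast m ⁻¹' ((· -ᵥ p₂) '' S₂) with hQ₂
  have himg : ∀ (S : Set (Fin m → ℝ)) (p₀ : Fin m → ℝ), (∀ x ∈ S, ∀ i, ∃ q : ℚ, x i = (q : ℝ)) →
      p₀ ∈ S → qcast m '' (qcast m ⁻¹' ((· -ᵥ p₀) '' S)) = (· -ᵥ p₀) '' S := by
    intro S p₀ hrat hp₀
    apply Set.image_preimage_eq_of_subset
    rintro _ ⟨x, hx, rfl⟩
    obtain ⟨v, hv⟩ := qlift (x - p₀) (by
      intro i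
      obtain ⟨qx, hqx⟩ := hrat x hx i
      obtain ⟨qp, hqp⟩ := hrat p₀ hp₀ i
      exact ⟨qx - qp, by simp [hqx, hqp]⟩)
    exact ⟨v, by rw [hv]; simp [vsub_eq_sub]⟩
  have hQ₁img : qcast m '' Q₁ = (· -ᵥ p₁) '' S₁ := himg S₁ p₁ hS₁rat hp₁S
  have hQ₂img : qcast m '' Q₂ = (· -ᵥ p₂) '' S₂ := himg S₂ p₂ hS₂rat hp₂S
  set E₁ : Submodule ℚ (Fin m → ℚ) := span ℚ Q₁ with hE₁
  set E₂ : Submodule ℚ (Fin m → ℚ) := span ℚ Q₂ with hE₂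
  have hD₁ : W₁.direction = span ℝ (qcast m '' (E₁ : Set _)) := by
    rw [hE₁, span_qcast_span, hQ₁img, hW₁, direction_affineSpan]
    exact vectorSpan_eq_span_vsub_set_right ℝ hp₁S
  have hD₂ : W₂.direction = span ℝ (qcast m '' (E₂ : Set _)) := by
    rw [hE₂, span_qcast_span, hQ₂img, hW₂, direction_affineSpan]
    exact vectorSpan_eq_span_vsub_set_right ℝ hp₂S
  -- find a rational point in the intersection
  obtain ⟨w, hw⟩ := qlift (p₁ - p₂) (by
    intro i
    obtain ⟨q₁, hq₁⟩ := hS₁rat p₁ hp₁S i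
    obtain ⟨q₂, hq₂⟩ := hS₂rat p₂ hp₂S i
    exact ⟨q₁ - q₂, by simp [hq₁, hq₂]⟩)
  have hwsup : qcast m w ∈ span ℝ (qcast m '' (E₁ : Set _)) ⊔ span ℝ (qcast m '' (E₂ : Set _)) := by
    rw [hw]
    have h1 : p - p₁ ∈ W₁.direction := by
      have := AffineSubspace.vsub_mem_direction hp₁ hp₁W
      simpa [vsub_eq_sub] using this
    have h2 : p - p₂ ∈ W₂.direction := by
      have := AffineSubspace.vsub_mem_direction hp₂ hp₂W
      simpa [vsub_eq_sub] using this
    have : p₁ - p₂ = (p - p₂) - (p - p₁) := by ring_nf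
    rw [this]
    exact sub_mem (Submodule.mem_sup_right (hD₂ ▸ h2)) (Submodule.mem_sup_left (hD₁ ▸ h1))
  rw [sup_coe_span] at hwsup
  have hwE : w ∈ E₁ ⊔ E₂ := mem_of_qcast_mem_span _ _ hwsup
  obtain ⟨u₁, hu₁, u₂, hu₂, huw⟩ := Submodule.mem_sup.mp hwE
  set x₀ : Fin m → ℝ := p₂ + qcast m u₂ with hx₀
  have hx₀rat : ∀ i, ∃ q : ℚ, x₀ i = (q : ℝ) := by
    intro i
    obtain ⟨q₂, hq₂⟩ := hS₂rat p₂ hp₂S i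
    exact ⟨q₂ + u₂ i, by simp [hx₀, hq₂, qcast_apply]⟩
  have hx₀W₂ : x₀ ∈ W₂ := by
    have hmem : qcast m u₂ ∈ W₂.direction := by
      rw [hD₂]; exact subset_span (Set.mem_image_of_mem _ hu₂)
    have := AffineSubspace.vadd_mem_of_mem_direction hmem hp₂W
    simpa [hx₀, vadd_eq_add, add_comm] using this
  have hsum : qcast m u₁ + qcast m u₂ = p₁ - p₂ := by
    rw [← map_add, huw, hw]
  have hx₀W₁ : x₀ ∈ W₁ := by
    have hx₀eq : x₀ = p₁ - qcast m u₁ := by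
      rw [hx₀]; linear_combination hsum
    have hmem : -(qcast m u₁) ∈ W₁.direction := by
      rw [hD₁]
      exact neg_mem (subset_span (Set.mem_image_of_mem _ hu₁))
    have := AffineSubspace.vadd_mem_of_mem_direction hmem hp₁W
    have h2 : x₀ = -(qcast m u₁) +ᵥ p₁ := by
      rw [hx₀eq]; simp [vadd_eq_add, sub_eq_neg_add]
    rwa [h2]
  -- the intersection
  have hx₀W : x₀ ∈ W₁ ⊓ W₂ := ⟨hx₀W₁, hx₀W₂⟩
  set E₀ : Submodule ℚ (Fin m → ℚ) := E₁ ⊓ E₂ with hE₀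
  have hWdir : (W₁ ⊓ W₂).direction = span ℝ (qcast m '' (E₀ : Set _)) := by
    rw [AffineSubspace.direction_inf_of_mem hx₀W₁ hx₀W₂, hD₁, hD₂, inf_coe_span]
  set S₀ : Set (Fin m → ℝ) := (fun u => x₀ + qcast m u) '' (E₀ : Set _) with hS₀
  have hx₀S₀ : x₀ ∈ S₀ := ⟨0, zero_mem _, by simp⟩
  have hS₀rat : ∀ x ∈ S₀, ∀ i, ∃ q : ℚ, x i = (q : ℝ) := by
    rintro _ ⟨u, hu, rfl⟩ i
    obtain ⟨q, hq⟩ := hx₀rat i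
    exact ⟨q + u i, by simp [hq, qcast_apply]⟩
  have hS₀W : S₀ ⊆ (W₁ ⊓ W₂ : AffineSubspace ℝ (Fin m → ℝ)) := by
    rintro _ ⟨u, hu, rfl⟩
    have hmem : qcast m u ∈ (W₁ ⊓ W₂).direction := by
      rw [hWdir]; exact subset_span (Set.mem_image_of_mem _ hu)
    have := AffineSubspace.vadd_mem_of_mem_direction hmem hx₀W
    simpa [vadd_eq_add, add_comm] using this
  have hspanS₀ : affineSpan ℝ S₀ = W₁ ⊓ W₂ := by
    apply AffineSubspace.ext_of_direction_eq
    · rw [direction_affineSpan, vectorSpan_eq_span_vsub_set_right ℝ hx₀S₀, hWdir]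
      congr 1
      rw [hS₀, Set.image_image]
      ext z
      simp [vsub_eq_sub]
    · exact ⟨x₀, subset_affineSpan ℝ S₀ hx₀S₀, hx₀W⟩
  refine ⟨⟨S₀, hS₀rat, hspanS₀.symm⟩, ⟨x₀, hx₀W, hx₀rat⟩, ?_⟩
  apply le_antisymm
  · refine le_trans (le_of_eq hspanS₀.symm) (affineSpan_mono ℝ ?_)
    intro x hx
    exact ⟨hS₀W hx, hS₀rat x hx⟩
  · rw [affineSpan_le]
    intro x hx
    exact hx.1
end

section
/- Fix integers m ≥ 1 and n ≥ 0. Call an affine subspace W of ℝ^m rational if W equals the affine span over ℝ of a set of points of ℚ^m. Let v_1, …, v_{n+1} ∈ ℚ^m be affinely independent points (viewed in ℝ^m), let b_1, …, b_{n+1} be positive real numbers with ∑_{i=1}^{n+1} b_i = 1, and set v₀ := ∑_{i=1}^{n+1} b_i v_i. Assume that v₀ is not contained in any rational affine subspace of ℝ^m of dimension strictly less than n. Then the real numbers b_1, …, b_{n+1} are linearly independent over ℚ; that is, the only rational numbers q_1, …, q_{n+1} with q_1 b_1 + ⋯ + q_{n+1} b_{n+1} = 0 are q_1 = ⋯ =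 q_{n+1} = 0. -/
/-- If `v₀` is a positive convex combination `∑ b i • v i` of affinely independent rational
points `v 0, …, v n` of `ℝ^m` and `v₀` lies in no rational affine subspace of dimension `< n`,
then the barycentric coordinates `b 0, …, b n` are linearly independent over `ℚ`. -/
theorem stmt_6 (m n : ℕ) (hm : 1 ≤ m)
    (v : Fin (n + 1) → (Fin m → ℝ))
    (hvQ : ∀ i j, ∃ q : ℚ, v i j = (q : ℝ))
    (hvind : AffineIndependent ℝ v)
    (b : Fin (n + 1) → ℝ) (hb : ∀ i, 0 < b i) (hbsum : ∑ i, b i = 1)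
    (v₀ : Fin m → ℝ) (hv₀ : v₀ = ∑ i, b i • v i)
    (hmin : ∀ W : AffineSubspace ℝ (Fin m → ℝ), IsRationalAffine m W → v₀ ∈ W →
      n ≤ Module.finrank ℝ W.direction) :
    ∀ q : Fin (n + 1) → ℚ, ∑ i, (q i : ℝ) * b i = 0 → ∀ i, q i = 0 := by
  intro q hq
  by_cases hconst : ∀ k l, q k = q l
  · intro i
    have hsum : ∑ k, (q k : ℝ) * b k = (q i : ℝ) * ∑ k, b k := by
      rw [Finset.mul_sum]
      exact Finset.sum_congr rfl fun k _ => by rw [hconst k i]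
    rw [hsum, hbsum, mul_one] at hq
    exact_mod_cast hq
  · exfalso
    push_neg at hconst
    obtain ⟨i, j, hij⟩ := hconst
    have hne : i ≠ j := fun h => hij (h ▸ rfl)
    set d : ℚ := q i - q j with hd_def
    have hd : d ≠ 0 := sub_ne_zero.mpr hij
    have hdR : (d : ℝ) ≠ 0 := by exact_mod_cast hd
    have hdR' : (d : ℝ) = (q i : ℝ) - (q j : ℝ) := by rw [hd_def]; push_cast; ring
    set pi' : ℚ := -(q j) / d with hpi_def
    set pj' : ℚ := q i / d with hpj_def
    set α : Fin (n + 1) → ℚ := fun k => (q k - q j) / d with hα_def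
    set β : Fin (n + 1) → ℚ := fun k => (q i - q k) / d with hβ_def
    choose r hr using hvQ
    set P : Fin m → ℝ := (pi' : ℝ) • v i + (pj' : ℝ) • v j with hP_def
    set U : Fin (n + 1) → (Fin m → ℝ) :=
      fun k => v k - (α k : ℝ) • v i - (β k : ℝ) • v j with hU_def
    set s : Finset (Fin (n + 1)) := (Finset.univ.erase i).erase j with hs_def
    have hjmem : j ∈ Finset.univ.erase i := Finset.mem_erase.mpr ⟨hne.symm, Finset.mem_univ j⟩
    set S : Set (Fin m → ℝ) := insert P ((fun k => P + U k) '' ↑s) with hS_def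
    -- splitting sums at i and j
    have hsplit : ∀ f : Fin (n + 1) → ℝ, ∑ k, f k = f i + (f j + ∑ k ∈ s, f k) := by
      intro f
      have h1 : f j + ∑ k ∈ s, f k = ∑ k ∈ Finset.univ.erase i, f k :=
        Finset.add_sum_erase _ f hjmem
      have h2 : f i + ∑ k ∈ Finset.univ.erase i, f k = ∑ k, f k :=
        Finset.add_sum_erase _ f (Finset.mem_univ i)
      rw [← h2, ← h1]
    have hsum_s : ∑ k ∈ s, b k = 1 - b i - b j := by
      have := hsplit b
      rw [hbsum] at this
      linarith
    have hqsum_s : ∑ k ∈ s, (q k : ℝ) * b k = -((q i : ℝ) * b i + (q j : ℝ) * b j) := by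
      have := hsplit (fun k => (q k : ℝ) * b k)
      rw [hq] at this
      linarith
    -- the two scalar identities
    have hAi : ∑ k ∈ s, b k * (α k : ℝ) = (pi' : ℝ) - b i := by
      have e : ∀ k, b k * (α k : ℝ) =
          ((q k : ℝ) * b k) * (d : ℝ)⁻¹ - ((q j : ℝ) * (d : ℝ)⁻¹) * b k := by
        intro k
        have hα : (α k : ℝ) = ((q k : ℝ) - (q j : ℝ)) / (d : ℝ) := by
          rw [hα_def]; push_cast; ring
        rw [hα]; field_simp
      rw [Finset.sum_congr rfl fun k _ => e k, Finset.sum_sub_distrib, ← Finset.sum_mul,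
        ← Finset.mul_sum, hqsum_s, hsum_s]
      have hpi : (pi' : ℝ) = -(q j : ℝ) / (d : ℝ) := by rw [hpi_def]; push_cast; ring
      rw [hpi]
      field_simp [hdR]
      rw [hdR']
      ring
    have hAj : ∑ k ∈ s, b k * (β k : ℝ) = (pj' : ℝ) - b j := by
      have e : ∀ k, b k * (β k : ℝ) =
          ((q i : ℝ) * (d : ℝ)⁻¹) * b k - ((q k : ℝ) * b k) * (d : ℝ)⁻¹ := by
        intro k
        have hβ : (β k : ℝ) = ((q i : ℝ) - (q k : ℝ)) / (d : ℝ) := by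
          rw [hβ_def]; push_cast; ring
        rw [hβ]; field_simp
      rw [Finset.sum_congr rfl fun k _ => e k, Finset.sum_sub_distrib, ← Finset.sum_mul,
        ← Finset.mul_sum, hqsum_s, hsum_s]
      have hpj : (pj' : ℝ) = (q i : ℝ) / (d : ℝ) := by rw [hpj_def]; push_cast; ring
      rw [hpj]
      field_simp [hdR]
      rw [hdR']
      ring
    -- the key identity
    have hkey : v₀ = (∑ k ∈ s, b k • U k) + P := by
      funext t
      have hU : ∀ k, (b k • U k) t =
          b k * v k t - (b k * (α k : ℝ)) * v i t - (b k * (β k : ℝ)) * v j t := by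
        intro k
        simp only [hU_def, Pi.smul_apply, Pi.sub_apply, smul_eq_mul]
        ring
      have hL : v₀ t = ∑ k, b k * v k t := by
        rw [hv₀]
        simp [Finset.sum_apply, Pi.smul_apply, smul_eq_mul]
      have hPt : P t = (pi' : ℝ) * v i t + (pj' : ℝ) * v j t := by
        simp [hP_def, Pi.add_apply, Pi.smul_apply, smul_eq_mul]
      rw [hL, hsplit (fun k => b k * v k t)]
      simp only [Pi.add_apply, Finset.sum_apply]
      rw [Finset.sum_congr rfl fun k _ => hU k, Finset.sum_sub_distrib, Finset.sum_sub_distrib,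
        ← Finset.sum_mul, ← Finset.sum_mul, hAi, hAj, hPt]
      ring
    -- rationality of S
    have hSrat : ∀ x ∈ S, ∀ t, ∃ c : ℚ, x t = (c : ℝ) := by
      intro x hx t
      rcases hx with rfl | ⟨k, hk, rfl⟩
      · refine ⟨pi' * r i t + pj' * r j t, ?_⟩
        simp only [hP_def, Pi.add_apply, Pi.smul_apply, smul_eq_mul, hr]
        push_cast
        ring
      · refine ⟨pi' * r i t + pj' * r j t + (r k t - α k * r i t - β k * r j t), ?_⟩
        simp only [hP_def, hU_def, Pi.add_apply, Pi.sub_apply, Pi.smul_apply, smul_eq_mul, hr]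
        push_cast
        ring
    -- v₀ lies in the affine span of S
    have hPS : P ∈ S := Set.mem_insert _ _
    have hW : v₀ ∈ affineSpan ℝ S := by
      rw [hkey]
      have hdirmem : (∑ k ∈ s, b k • U k) ∈ (affineSpan ℝ S).direction := by
        apply Submodule.sum_mem
        intro k hk
        apply Submodule.smul_mem
        have hUk : U k = (P + U k) -ᵥ P := by
          rw [vsub_eq_sub]; abel
        rw [hUk]
        exact AffineSubspace.vsub_mem_direction
          (subset_affineSpan ℝ S (Set.mem_insert_iff.mpr (Or.inr ⟨k, Finset.mem_coe.mpr hk, rfl⟩)))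
          (subset_affineSpan ℝ S hPS)
      have := AffineSubspace.vadd_mem_of_mem_direction hdirmem (subset_affineSpan ℝ S hPS)
      rwa [vadd_eq_add] at this
    -- dimension bound
    set T : Finset (Fin m → ℝ) := s.image U with hT_def
    have hsub : ∀ x ∈ S, x - P ∈ Submodule.span ℝ (T : Set (Fin m → ℝ)) := by
      intro x hx
      rcases hx with rfl | ⟨k, hk, rfl⟩
      · simp
      · have : P + U k - P = U k := by abel
        rw [this]
        exact Submodule.subset_span (Finset.mem_coe.mpr
          (Finset.mem_image.mpr ⟨k, Finset.mem_coe.mp hk, rfl⟩))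
    have hdir : vectorSpan ℝ S ≤ Submodule.span ℝ (T : Set (Fin m → ℝ)) := by
      rw [vectorSpan_def, Submodule.span_le]
      rintro z ⟨x, hx, y, hy, rfl⟩
      show x - y ∈ _
      have hxy : x - y = (x - P) - (y - P) := by abel
      rw [hxy]
      exact sub_mem (hsub x hx) (hsub y hy)
    have hscard : s.card = n - 1 := by
      rw [hs_def, Finset.card_erase_of_mem hjmem, Finset.card_erase_of_mem (Finset.mem_univ i)]
      simp
    have hn1 : 1 ≤ n := by
      have h2 : 1 < Fintype.card (Fin (n + 1)) := Fintype.one_lt_card_iff.mpr ⟨i, j, hne⟩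
      simp [Fintype.card_fin] at h2
      omega
    have hfin : Module.finrank ℝ (vectorSpan ℝ S) ≤ n - 1 := by
      calc Module.finrank ℝ (vectorSpan ℝ S)
          ≤ Module.finrank ℝ (Submodule.span ℝ (T : Set (Fin m → ℝ))) :=
            Submodule.finrank_mono hdir
        _ ≤ T.card := finrank_span_finset_le_card T
        _ ≤ s.card := Finset.card_image_le
        _ = n - 1 := hscard
    have hge := hmin (affineSpan ℝ S) ⟨S, hSrat, rfl⟩ hW
    rw [direction_affineSpan] at hge
    omega
end

section
/- Let V be a real vector space, let m be a positive integer, let g_1, …, g_m ∈ V, and let v_1, …, v_m be positive real numbers; set x := ∑_{i=1}^m v_i · g_i. Then there exist a positive integer k, positive real numbers a_1, …, a_k that are linearly independent over ℚ (the only rationals q_1, …, q_k with ∑ q_j a_j = 0 are all zero), and elements h_1, …, h_k ∈ V, each of the form h_j = ∑_{i=1}^m c_{j,i} · g_i with nonnegative integers c_{j,i}, such that x = ∑_{j=1}^k a_j · h_j. -/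
open Finset

/-- Carathéodory-type reduction: any nonneg-coefficient representation can be refined to one
with positive coefficients and ℝ-linearly independent rational vectors, choosing a subfamily
of the original vectors with originally nonzero coefficients. -/
lemma step1 (m : ℕ) : ∀ (k : ℕ) (a : Fin k → ℝ) (w : Fin k → Fin m → ℚ),
    (∀ l, 0 ≤ a l) →
    ∃ (k' : ℕ) (ι : Fin k' → Fin k) (a' : Fin k' → ℝ),
      (∀ l, 0 < a' l) ∧ (∀ l, 0 < a (ι l)) ∧
      LinearIndependent ℝ (fun l => (fun i => ((w (ι l) i : ℝ)) : Fin m → ℝ)) ∧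
      (∀ i, ∑ l, a' l * (w (ι l) i : ℝ) = ∑ l, a l * (w l i : ℝ)) := by
  intro k
  induction k using Nat.strong_induction_on with
  | _ k IH =>
  intro a w ha
  by_cases hz : ∃ l0, a l0 = 0
  · -- drop a zero coefficient
    obtain ⟨l0, hl0⟩ := hz
    obtain ⟨k0, rfl⟩ : ∃ k0, k = k0 + 1 := ⟨k - 1, (Nat.succ_pred_eq_of_pos l0.pos).symm⟩
    obtain ⟨k', ι, a', h1, h2, h3, h4⟩ :=
        IH k0 (by omega) (fun l => a (l0.succAbove l)) (fun l => w (l0.succAbove l))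
          (fun l => ha _)
    refine ⟨k', fun l => l0.succAbove (ι l), a', h1, h2, h3, fun i => ?_⟩
    rw [Fin.sum_univ_succAbove (fun l => a l * (w l i : ℝ)) l0, hl0, zero_mul, zero_add]
    exact h4 i
  · push_neg at hz
    have ha' : ∀ l, 0 < a l := fun l => lt_of_le_of_ne (ha l) (Ne.symm (hz l))
    by_cases hind : LinearIndependent ℝ (fun l => (fun i => ((w l i : ℝ)) : Fin m → ℝ))
    · exact ⟨k, id, a, ha', ha', hind, fun i => rfl⟩
    · -- dependence reduction
      obtain ⟨g, hg0, lg, hlg⟩ := Fintype.not_linearIndependent_iff.mp hind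
      -- wlog some coefficient positive
      have key : ∀ (g : Fin k → ℝ), (∑ l, g l • (fun i => ((w l i : ℝ)) : Fin m → ℝ)) = 0 →
          (∃ l, 0 < g l) →
          ∃ (k' : ℕ) (ι : Fin k' → Fin k) (a' : Fin k' → ℝ),
            (∀ l, 0 < a' l) ∧ (∀ l, 0 < a (ι l)) ∧
            LinearIndependent ℝ (fun l => (fun i => ((w (ι l) i : ℝ)) : Fin m → ℝ)) ∧
            (∀ i, ∑ l, a' l * (w (ι l) i : ℝ) = ∑ l, a l * (w l i : ℝ)) := by
        intro g hg0 hpos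
        set s : Finset (Fin k) := univ.filter (fun l => 0 < g l) with hs
        have hsne : s.Nonempty := by
          obtain ⟨l, hl⟩ := hpos
          exact ⟨l, by simp [hs, hl]⟩
        obtain ⟨l1, hl1s, hl1⟩ := Finset.exists_mem_eq_inf' hsne (fun l => a l / g l)
        set θ : ℝ := s.inf' hsne (fun l => a l / g l) with hθ
        have hgl1 : 0 < g l1 := by simpa [hs] using hl1s
        have hθpos : 0 < θ := by
          rw [hl1]; exact div_pos (ha' l1) hgl1
        set a2 : Fin k → ℝ := fun l => a l - θ * g l with ha2
        have ha2nn : ∀ l, 0 ≤ a2 l := by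
          intro l
          by_cases hgl : 0 < g l
          · have hmem : l ∈ s := by simp [hs, hgl]
            have : θ ≤ a l / g l := Finset.inf'_le _ hmem
            have := (le_div_iff₀ hgl).mp this
            simp only [ha2]; linarith
          · push_neg at hgl
            have : θ * g l ≤ 0 := mul_nonpos_of_nonneg_of_nonpos hθpos.le hgl
            have := ha l
            simp only [ha2]; linarith
        have ha2l1 : a2 l1 = 0 := by
          have hθeq : θ = a l1 / g l1 := hl1
          simp only [ha2, hθeq]
          rw [div_mul_cancel₀ _ (ne_of_gt hgl1), sub_self]
        have hsum2 : ∀ i, ∑ l, a2 l * (w l i : ℝ) = ∑ l, a l * (w l i : ℝ) := by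
          intro i
          have hzero : ∑ l, g l * (w l i : ℝ) = 0 := by
            have := congrFun hg0 i
            simpa using this
          simp only [ha2, sub_mul, Finset.sum_sub_distrib]
          rw [show ∑ l, θ * g l * (w l i:ℝ) = θ * ∑ l, g l * (w l i:ℝ) by
            rw [Finset.mul_sum]; congr 1; funext l; ring]
          rw [hzero, mul_zero, sub_zero]
        -- now drop l1
        obtain ⟨k0, rfl⟩ : ∃ k0, k = k0 + 1 := ⟨k - 1, (Nat.succ_pred_eq_of_pos l1.pos).symm⟩
        obtain ⟨k', ι, a', h1, h2, h3, h4⟩ :=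
          IH k0 (by omega) (fun l => a2 (l1.succAbove l)) (fun l => w (l1.succAbove l))
            (fun l => ha2nn _)
        refine ⟨k', fun l => l1.succAbove (ι l), a', h1, fun l => ha' _, h3, fun i => ?_⟩
        have := h4 i
        rw [this, ← hsum2 i, Fin.sum_univ_succAbove (fun l => a2 l * (w l i : ℝ)) l1,
          ha2l1, zero_mul, zero_add]
      by_cases hgp : ∃ l, 0 < g l
      · exact key g hg0 hgp
      · push_neg at hgp
        refine key (-g) ?_ ⟨lg, ?_⟩
        · simp only [Pi.neg_apply, neg_smul, Finset.sum_neg_distrib, hg0, neg_zero]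
        · simp only [Pi.neg_apply, neg_pos]
          exact lt_of_le_of_ne (hgp lg) hlg


lemma step2 (m : ℕ) (v : Fin m → ℝ) : ∀ (k : ℕ) (a : Fin k → ℝ) (w : Fin k → Fin m → ℚ),
    (∀ l, 0 < a l) → (∀ l i, 0 ≤ w l i) →
    LinearIndependent ℝ (fun l => (fun i => ((w l i : ℝ)) : Fin m → ℝ)) →
    (∀ i, v i = ∑ l, a l * (w l i : ℝ)) →
    ∃ (k' : ℕ) (a' : Fin k' → ℝ) (w' : Fin k' → Fin m → ℚ),
      (∀ j, 0 < a' j) ∧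
      (∀ q : Fin k' → ℚ, ∑ j, (q j : ℝ) * a' j = 0 → ∀ j, q j = 0) ∧
      (∀ j i, 0 ≤ w' j i) ∧
      (∀ i, v i = ∑ j, a' j * (w' j i : ℝ)) := by
  intro k
  induction k using Nat.strong_induction_on with
  | _ k IH =>
  intro a w ha hw hind hrep
  by_cases hq : ∀ q : Fin k → ℚ, ∑ j, (q j : ℝ) * a j = 0 → ∀ j, q j = 0
  · exact ⟨k, a, w, ha, hq, hw, hrep⟩
  push_neg at hq
  obtain ⟨q, hq0, j0, hj0⟩ := hq
  have hk : 0 < k := j0.pos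
  -- the positive and negative parts of the relation
  set S : ℝ := ∑ l, (if 0 < q l then (q l : ℝ) * a l else 0) with hS
  set S' : ℝ := ∑ l, (if q l < 0 then (-(q l : ℝ)) * a l else 0) with hS'
  have hSS' : S = S' := by
    have h1 : S - S' = ∑ l, (q l : ℝ) * a l := by
      rw [hS, hS', ← Finset.sum_sub_distrib]
      refine Finset.sum_congr rfl (fun l _ => ?_)
      rcases lt_trichotomy (q l) 0 with h | h | h
      · rw [if_neg (by exact_mod_cast not_lt.mpr h.le), if_pos h]; ring
      · rw [if_neg (by simp [h]), if_neg (by simp [h])]; simp [h]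
      · rw [if_pos h, if_neg (by exact_mod_cast not_lt.mpr h.le)]; ring
    rw [hq0] at h1; linarith
  have hSpos : 0 < S := by
    rcases lt_trichotomy (q j0) 0 with h | h | h
    · rw [hSS', hS']
      refine Finset.sum_pos' (fun l _ => ?_) ⟨j0, Finset.mem_univ _, ?_⟩
      · split_ifs with hl
        · have : (0:ℝ) < -(q l : ℝ) := by exact_mod_cast neg_pos.mpr hl
          exact (mul_pos this (ha l)).le
        · exact le_rfl
      · rw [if_pos h]
        have : (0:ℝ) < -(q j0 : ℝ) := by exact_mod_cast neg_pos.mpr h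
        exact mul_pos this (ha j0)
    · exact absurd h hj0
    · rw [hS]
      refine Finset.sum_pos' (fun l _ => ?_) ⟨j0, Finset.mem_univ _, ?_⟩
      · split_ifs with hl
        · have : (0:ℝ) < (q l : ℝ) := by exact_mod_cast hl
          exact (mul_pos this (ha l)).le
        · exact le_rfl
      · rw [if_pos h]
        have : (0:ℝ) < (q j0 : ℝ) := by exact_mod_cast h
        exact mul_pos this (ha j0)
  -- the big family indexed by pairs
  classical
  set b : Fin k × Fin k → ℝ := fun p =>
    if 0 < q p.1 ∧ q p.2 < 0 then a p.1 * a p.2 / S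
    else if p.1 = p.2 ∧ q p.1 = 0 then a p.1 else 0 with hb
  set U : Fin k × Fin k → Fin m → ℚ := fun p =>
    if 0 < q p.1 ∧ q p.2 < 0 then (fun t => (-(q p.2)) * w p.1 t + (q p.1) * w p.2 t)
    else w p.1 with hU
  have hbnn : ∀ p, 0 ≤ b p := by
    intro p
    simp only [hb]
    split_ifs with h1 h2
    · exact div_nonneg (mul_nonneg (ha p.1).le (ha p.2).le) hSpos.le
    · exact (ha p.1).le
    · exact le_rfl
  have hUnn : ∀ p t, 0 ≤ U p t := by
    intro p t
    simp only [hU]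
    split_ifs with h1
    · have h1a : (0:ℚ) ≤ -(q p.2) := by linarith [h1.2]
      have h1b : (0:ℚ) ≤ q p.1 := h1.1.le
      have := hw p.1 t; have := hw p.2 t
      positivity
    · exact hw p.1 t
  have hgamma : ∀ t, ∑ p : Fin k × Fin k, b p * ((U p t : ℚ) : ℝ) = ∑ l, a l * (w l t : ℝ) := by
    intro t
    have hsplit : ∀ p : Fin k × Fin k, b p * ((U p t : ℚ) : ℝ) =
        (if 0 < q p.1 ∧ q p.2 < 0 then
            (a p.1 * (w p.1 t : ℝ) / S) * ((-(q p.2) : ℝ) * a p.2) else 0)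
        + (if 0 < q p.1 ∧ q p.2 < 0 then
            ((q p.1 : ℝ) * a p.1 / S) * (a p.2 * (w p.2 t : ℝ)) else 0)
        + (if p.1 = p.2 ∧ q p.1 = 0 then a p.1 * (w p.1 t : ℝ) else 0) := by
      intro p
      simp only [hb, hU]
      split_ifs with h1 h2
      · exact absurd h2.2 (by exact_mod_cast h1.1.ne')
      · push_cast; ring
      · ring
      · ring
    rw [Finset.sum_congr rfl (fun p _ => hsplit p)]
    rw [Finset.sum_add_distrib, Finset.sum_add_distrib]
    have hX : ∑ p : Fin k × Fin k, (if 0 < q p.1 ∧ q p.2 < 0 then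
        (a p.1 * (w p.1 t : ℝ) / S) * ((-(q p.2) : ℝ) * a p.2) else 0)
        = ∑ i, (if 0 < q i then a i * (w i t : ℝ) else 0) := by
      rw [Fintype.sum_prod_type]
      refine Finset.sum_congr rfl (fun i _ => ?_)
      by_cases hi : 0 < q i
      · simp only [hi, true_and]
        have : ∀ j : Fin k, (if q j < 0 then
            (a i * (w i t : ℝ) / S) * ((-(q j) : ℝ) * a j) else 0)
            = (a i * (w i t : ℝ) / S) * (if q j < 0 then (-(q j : ℝ)) * a j else 0) := by
          intro j; split_ifs with hj
          · push_cast; ring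
          · ring
        rw [Finset.sum_congr rfl (fun j _ => this j), ← Finset.mul_sum, ← hS', ← hSS']
        simp only [if_true]
        field_simp
      · simp [hi]
    have hY : ∑ p : Fin k × Fin k, (if 0 < q p.1 ∧ q p.2 < 0 then
        ((q p.1 : ℝ) * a p.1 / S) * (a p.2 * (w p.2 t : ℝ)) else 0)
        = ∑ j, (if q j < 0 then a j * (w j t : ℝ) else 0) := by
      rw [Fintype.sum_prod_type]
      set T : ℝ := ∑ j, (if q j < 0 then a j * (w j t : ℝ) else 0) with hT
      have inner : ∀ i : Fin k, (∑ j, if 0 < q i ∧ q j < 0 then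
          ((q i : ℝ) * a i / S) * (a j * (w j t : ℝ)) else 0)
          = (if 0 < q i then (q i : ℝ) * a i else 0) * (T / S) := by
        intro i
        by_cases hi : 0 < q i
        · simp only [hi, true_and, if_true]
          have : ∀ j : Fin k, (if q j < 0 then
              ((q i : ℝ) * a i / S) * (a j * (w j t : ℝ)) else 0)
              = ((q i : ℝ) * a i / S) * (if q j < 0 then a j * (w j t : ℝ) else 0) := by
            intro j; split_ifs <;> ring
          rw [Finset.sum_congr rfl (fun j _ => this j), ← Finset.mul_sum, ← hT]
          ring
        · simp [hi]
      rw [Finset.sum_congr rfl (fun i _ => inner i), ← Finset.sum_mul, ← hS, hT]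
      field_simp
    have hZ : ∑ p : Fin k × Fin k, (if p.1 = p.2 ∧ q p.1 = 0 then
        a p.1 * (w p.1 t : ℝ) else 0)
        = ∑ i, (if q i = 0 then a i * (w i t : ℝ) else 0) := by
      rw [Fintype.sum_prod_type]
      refine Finset.sum_congr rfl (fun i _ => ?_)
      by_cases hqi : q i = 0
      · simp only [hqi, and_true]
        rw [Finset.sum_ite_eq]
        simp
      · simp [hqi]
    rw [hX, hY, hZ, ← Finset.sum_add_distrib, ← Finset.sum_add_distrib]
    refine Finset.sum_congr rfl (fun i _ => ?_)
    rcases lt_trichotomy (q i) 0 with h | h | h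
    · rw [if_neg (not_lt.mpr h.le), if_pos h, if_neg h.ne]; ring
    · rw [if_neg (by simp [h]), if_neg (by simp [h]), if_pos h]; ring
    · rw [if_pos h, if_neg (not_lt.mpr h.le), if_neg h.ne']; ring
  -- reindex over `Fin (k * k)` and apply step1
  set e : Fin (k * k) ≃ Fin k × Fin k := finProdFinEquiv.symm with he
  obtain ⟨k'', ι, a'', h1, h2, h3, h4⟩ :=
    step1 m (k * k) (fun l => b (e l)) (fun l => U (e l)) (fun l => hbnn _)
  -- the linear functional given by q and the linear map given by w
  set fq : (Fin k → ℝ) →ₗ[ℝ] ℝ :=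
    { toFun := fun c => ∑ l, (q l : ℝ) * c l
      map_add' := by
        intro c d
        simp only [Pi.add_apply, mul_add, Finset.sum_add_distrib]
      map_smul' := by
        intro s c
        simp only [Pi.smul_apply, smul_eq_mul, RingHom.id_apply, Finset.mul_sum]
        exact Finset.sum_congr rfl (fun l _ => by ring) } with hfq
  set Tm : (Fin k → ℝ) →ₗ[ℝ] (Fin m → ℝ) :=
    { toFun := fun c => fun t => ∑ l, c l * (w l t : ℝ)
      map_add' := by
        intro c d
        funext t
        simp only [Pi.add_apply, add_mul, Finset.sum_add_distrib]
      map_smul' := by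
        intro s c
        funext t
        simp only [Pi.smul_apply, smul_eq_mul, RingHom.id_apply, Finset.mul_sum]
        exact Finset.sum_congr rfl (fun l _ => by ring) } with hTm
  have hmem : ∀ l : Fin k'', (fun t => ((U (e (ι l)) t : ℚ) : ℝ)) ∈
      (LinearMap.ker fq).map Tm := by
    intro l
    have hbpos : 0 < b (e (ι l)) := h2 l
    set p : Fin k × Fin k := e (ι l) with hp
    by_cases hc1 : 0 < q p.1 ∧ q p.2 < 0
    · have hne : p.1 ≠ p.2 := by
        intro hcontra
        rw [hcontra] at hc1
        exact absurd hc1.2 (not_lt.mpr hc1.1.le)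
      refine ⟨fun l' => if l' = p.1 then (-(q p.2) : ℝ) else if l' = p.2 then (q p.1 : ℝ)
        else 0, ?_, ?_⟩
      · simp only [SetLike.mem_coe, LinearMap.mem_ker, hfq, LinearMap.coe_mk, AddHom.coe_mk]
        have : ∀ l' : Fin k, (q l' : ℝ) * (if l' = p.1 then (-(q p.2) : ℝ)
            else if l' = p.2 then (q p.1 : ℝ) else 0)
            = (if l' = p.1 then ((q p.1 : ℝ) * (-(q p.2) : ℝ)) else 0)
              + (if l' = p.2 then ((q p.2 : ℝ) * (q p.1 : ℝ)) else 0) := by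
          intro l'
          by_cases h1' : l' = p.1
          · subst h1'
            simp only [if_pos rfl, if_true, if_neg hne]
            try ring
          · by_cases h2' : l' = p.2
            · subst h2'
              simp only [if_neg h1', if_pos rfl, if_true]
              try ring
            · simp only [if_neg h1', if_neg h2']
              try ring
        rw [Finset.sum_congr rfl (fun l' _ => this l'), Finset.sum_add_distrib,
          Finset.sum_ite_eq', Finset.sum_ite_eq']
        simp only [Finset.mem_univ, if_pos]
        ring
      · funext t
        simp only [hTm, LinearMap.coe_mk, AddHom.coe_mk]
        have : ∀ l' : Fin k, (if l' = p.1 then (-(q p.2) : ℝ)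
            else if l' = p.2 then (q p.1 : ℝ) else 0) * (w l' t : ℝ)
            = (if l' = p.1 then ((-(q p.2) : ℝ) * (w p.1 t : ℝ)) else 0)
              + (if l' = p.2 then ((q p.1 : ℝ) * (w p.2 t : ℝ)) else 0) := by
          intro l'
          by_cases h1' : l' = p.1
          · subst h1'
            simp only [if_pos rfl, if_true, if_neg hne]
            try ring
          · by_cases h2' : l' = p.2
            · subst h2'
              simp only [if_neg h1', if_pos rfl, if_true]
              try ring
            · simp only [if_neg h1', if_neg h2']
              try ring
        rw [Finset.sum_congr rfl (fun l' _ => this l'), Finset.sum_add_distrib,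
          Finset.sum_ite_eq', Finset.sum_ite_eq']
        simp only [Finset.mem_univ, if_pos]
        rw [hU]
        simp only [if_pos hc1]
        push_cast
        ring
    · have hc2 : p.1 = p.2 ∧ q p.1 = 0 := by
        by_contra hcontra
        rw [hb] at hbpos
        simp only [if_neg hc1, if_neg hcontra] at hbpos
        exact lt_irrefl 0 hbpos
      refine ⟨fun l' => if l' = p.1 then 1 else 0, ?_, ?_⟩
      · simp only [SetLike.mem_coe, LinearMap.mem_ker, hfq, LinearMap.coe_mk, AddHom.coe_mk]
        have : ∀ l' : Fin k, (q l' : ℝ) * (if l' = p.1 then 1 else 0)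
            = (if l' = p.1 then ((q p.1 : ℝ)) else 0) := by
          intro l'
          by_cases h1' : l' = p.1
          · subst h1'; simp only [if_pos rfl, if_true]; try ring
          · simp only [if_neg h1']; try ring
        rw [Finset.sum_congr rfl (fun l' _ => this l'), Finset.sum_ite_eq']
        simp [hc2.2]
      · funext t
        simp only [hTm, LinearMap.coe_mk, AddHom.coe_mk]
        have : ∀ l' : Fin k, (if l' = p.1 then (1:ℝ) else 0) * (w l' t : ℝ)
            = (if l' = p.1 then ((w p.1 t : ℝ)) else 0) := by
          intro l'
          by_cases h1' : l' = p.1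
          · subst h1'; simp only [if_pos rfl, if_true]; try ring
          · simp only [if_neg h1']; try ring
        rw [Finset.sum_congr rfl (fun l' _ => this l'), Finset.sum_ite_eq']
        rw [hU]
        simp [if_neg hc1]
  -- the dimension bound
  have hkerrank : Module.finrank ℝ (LinearMap.ker fq) = k - 1 := by
    have hsurj : Function.Surjective fq := by
      intro r
      refine ⟨fun l' => if l' = j0 then ((q j0 : ℝ))⁻¹ * r else 0, ?_⟩
      simp only [hfq, LinearMap.coe_mk, AddHom.coe_mk]
      have : ∀ l' : Fin k, (q l' : ℝ) * (if l' = j0 then ((q j0 : ℝ))⁻¹ * r else 0)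
          = (if l' = j0 then ((q j0 : ℝ) * (((q j0 : ℝ))⁻¹ * r)) else 0) := by
        intro l'
        by_cases h1' : l' = j0
        · subst h1'; simp only [if_pos rfl, if_true]
        · simp only [if_neg h1']; try ring
      rw [Finset.sum_congr rfl (fun l' _ => this l'), Finset.sum_ite_eq']
      have hqj0 : (q j0 : ℝ) ≠ 0 := by exact_mod_cast hj0
      simp [hqj0]
    have hrange : LinearMap.range fq = ⊤ := LinearMap.range_eq_top.mpr hsurj
    have := LinearMap.finrank_range_add_finrank_ker fq
    rw [hrange, finrank_top, Module.finrank_self, Module.finrank_pi] at this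
    simp only [Fintype.card_fin] at this
    omega
  have hbound : k'' < k := by
    have hli := h3
    have hle : Submodule.span ℝ (Set.range (fun l : Fin k'' =>
        (fun t => ((U (e (ι l)) t : ℚ) : ℝ)))) ≤ (LinearMap.ker fq).map Tm := by
      rw [Submodule.span_le]
      rintro _ ⟨l, rfl⟩
      exact hmem l
    have h5 : Module.finrank ℝ (Submodule.span ℝ (Set.range (fun l : Fin k'' =>
        (fun t => ((U (e (ι l)) t : ℚ) : ℝ))))) = k'' := by
      rw [finrank_span_eq_card hli, Fintype.card_fin]
    have h6 : Module.finrank ℝ (Submodule.span ℝ (Set.range (fun l : Fin k'' =>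
        (fun t => ((U (e (ι l)) t : ℚ) : ℝ)))))
        ≤ Module.finrank ℝ ((LinearMap.ker fq).map Tm) := Submodule.finrank_mono hle
    have h7 := Submodule.finrank_map_le Tm (LinearMap.ker fq)
    omega
  -- recurse
  have hrep2 : ∀ t, v t = ∑ l : Fin k'', a'' l * ((U (e (ι l)) t : ℚ) : ℝ) := by
    intro t
    rw [hrep t, ← hgamma t, ← Equiv.sum_comp e (fun p => b p * ((U p t : ℚ) : ℝ))]
    exact (h4 t).symm
  exact IH k'' hbound a'' (fun l => U (e (ι l))) h1 (fun l t => hUnn _ _) h3 hrep2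

lemma rat_mul_den (r : ℚ) : r * (r.den : ℚ) = (r.num : ℚ) := by
  nth_rewrite 1 [← Rat.num_div_den r]
  rw [div_mul_cancel₀]
  exact_mod_cast r.den_nz

/-- Any positive real combination `x = ∑ v i • g i` of elements of a real vector space can be
rewritten as `x = ∑ a j • h j`, where the positive reals `a j` are linearly independent over
`ℚ` and each `h j` is a nonnegative-integer combination of the `g i`. -/
theorem stmt_7 (V : Type*) [AddCommGroup V] [Module ℝ V]
    (m : ℕ) (hm : 0 < m) (g : Fin m → V) (v : Fin m → ℝ) (hv : ∀ i, 0 < v i)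
    (x : V) (hx : x = ∑ i, v i • g i) :
    ∃ (k : ℕ) (a : Fin k → ℝ) (c : Fin k → Fin m → ℕ),
      0 < k ∧
      (∀ j, 0 < a j) ∧
      (∀ q : Fin k → ℚ, ∑ j, (q j : ℝ) * a j = 0 → ∀ j, q j = 0) ∧
      x = ∑ j, a j • (∑ i, (c j i : ℝ) • g i) := by
  classical
  set w0 : Fin m → Fin m → ℚ := fun l i => if l = i then 1 else 0 with hw0
  have hid : ∀ i, v i = ∑ l, v l * ((w0 l i : ℚ) : ℝ) := by
    intro i
    rw [hw0]
    have : ∀ l : Fin m, v l * (((if l = i then (1:ℚ) else 0) : ℚ) : ℝ)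
        = if l = i then v l else 0 := by
      intro l; split_ifs <;> simp
    rw [Finset.sum_congr rfl (fun l _ => this l), Finset.sum_ite_eq']
    simp
  obtain ⟨k1, ι, a1, ha1, _, hind1, hsum1⟩ := step1 m m v w0 (fun l => (hv l).le)
  have hrep1 : ∀ i, v i = ∑ l, a1 l * ((w0 (ι l) i : ℚ) : ℝ) := by
    intro i; rw [hid i, hsum1 i]
  have hw0nn : ∀ l i, (0:ℚ) ≤ w0 (ι l) i := by
    intro l i; rw [hw0]; dsimp only; split_ifs <;> norm_num
  obtain ⟨k', a', w', ha'pos, ha'ind, hw'nn, hrep'⟩ :=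
    step2 m v k1 a1 (fun l => w0 (ι l)) ha1 hw0nn hind1 hrep1
  have hk' : 0 < k' := by
    rcases Nat.eq_zero_or_pos k' with h | h
    · exfalso
      have := hrep' ⟨0, hm⟩
      subst h
      simp only [Finset.univ_eq_empty, Finset.sum_empty] at this
      exact absurd this (ne_of_gt (hv ⟨0, hm⟩))
    · exact h
  -- clear denominators
  set D : ℕ := ∏ p : Fin k' × Fin m, (w' p.1 p.2).den with hD
  have hDpos : 0 < D := Finset.prod_pos (fun p _ => (w' p.1 p.2).pos)
  have hDR : (0:ℝ) < (D:ℝ) := by exact_mod_cast hDpos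
  have hcast : ∀ j i, ∃ n : ℕ, ((n : ℚ)) = w' j i * (D : ℚ) := by
    intro j i
    obtain ⟨e, he⟩ : (w' j i).den ∣ D :=
      Finset.dvd_prod_of_mem (fun p : Fin k' × Fin m => (w' p.1 p.2).den)
        (Finset.mem_univ (j, i))
    have h1 : w' j i * (D : ℚ) = ((w' j i).num * e : ℤ) := by
      rw [he]
      push_cast
      rw [← mul_assoc, rat_mul_den]
    have h2 : (0:ℤ) ≤ (w' j i).num * e := by
      have := Rat.num_nonneg.mpr (hw'nn j i)
      positivity
    exact ⟨((w' j i).num * e).toNat, by rw [h1]; exact_mod_cast Int.toNat_of_nonneg h2⟩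
  set c : Fin k' → Fin m → ℕ := fun j i => (hcast j i).choose with hc
  have hceq : ∀ j i, ((c j i : ℚ)) = w' j i * (D : ℚ) := fun j i => (hcast j i).choose_spec
  refine ⟨k', fun j => a' j / D, c, hk', fun j => div_pos (ha'pos j) hDR, ?_, ?_⟩
  · intro q hq
    apply ha'ind q
    have : ∑ j, (q j : ℝ) * (a' j / D) = (∑ j, (q j : ℝ) * a' j) / D := by
      rw [Finset.sum_div]
      exact Finset.sum_congr rfl (fun j _ => by ring)
    rw [this, div_eq_zero_iff] at hq
    rcases hq with h | h
    · exact h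
    · exact absurd h (ne_of_gt hDR)
  · rw [hx]
    have hswap : ∑ i, v i • g i = ∑ j, ∑ i, (a' j * ((w' j i : ℚ) : ℝ)) • g i := by
      rw [Finset.sum_comm]
      refine Finset.sum_congr rfl (fun i _ => ?_)
      rw [hrep' i, Finset.sum_smul]
    rw [hswap]
    refine Finset.sum_congr rfl (fun j _ => ?_)
    rw [Finset.smul_sum]
    refine Finset.sum_congr rfl (fun i _ => ?_)
    rw [smul_smul]
    congr 1
    have : ((c j i : ℝ)) = ((w' j i : ℚ) : ℝ) * (D : ℝ) := by
      have := hceq j i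
      have h2 : (((c j i : ℚ)) : ℝ) = (((w' j i * (D:ℚ)) : ℚ) : ℝ) := by rw [this]
      push_cast at h2 ⊢
      linarith
    rw [this]
    field_simp
end
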